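/- For every real q with 0 ≤ q ≤ 1 − 1/b (where b > 1) and every complex z with |z| > 1, the infinite product ∏_{m=1}^∞ |1 + q^{m-1}/z| is at least (1 − 1/|z|) · e^{(π²/6)(1−b)}. -/

import Mathlib

open Real Complex

private lemma neg_log_le_aux {x : ℝ} (h0 : 0 ≤ x) (h1 : x < 1) :
    -Real.log (1 - x) ≤ x / (1 - x) := by
  have h : 0 < 1 - x := by linarith
  rw [← Real.log_inv]
  have h2 := Real.log_le_sub_one_of_pos (x := (1 - x)⁻¹) (by positivity)
  calc Real.log (1 - x)⁻¹ ≤ (1 - x)⁻¹ - 1 := h2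
    _ = x / (1 - x) := by field_simp; ring

private lemma sum_neg_log_le {q : ℝ} (hq0 : 0 ≤ q) (hq1 : q < 1) :
    ∑' m : ℕ, -Real.log (1 - q ^ (m + 1)) ≤ π ^ 2 / 6 * (q / (1 - q)) := by
  have h1q : 0 < 1 - q := by linarith
  have hqpow : ∀ n : ℕ, q ^ (n + 1) < 1 := fun n =>
    lt_of_le_of_lt
      (by simpa using pow_le_pow_of_le_one hq0 hq1.le (Nat.one_le_iff_ne_zero.2 (Nat.succ_ne_zero n)))
      hq1
  have h1qp : ∀ n : ℕ, 0 < 1 - q ^ (n + 1) := fun n => by linarith [hqpow n]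
  set F : ℕ → ℕ → ℝ := fun m k => q ^ ((m + 1) * (k + 1)) / ((k : ℝ) + 1) with hFdef
  have hFnn : ∀ m k, 0 ≤ F m k := fun m k => by
    apply div_nonneg (pow_nonneg hq0 _); positivity
  set N : ℕ → ℝ := fun m => -Real.log (1 - q ^ (m + 1)) with hNdef
  have hNnn : ∀ m, 0 ≤ N m := fun m => by
    simp only [hNdef, neg_nonneg]
    exact Real.log_nonpos (by linarith [h1qp m]) (by nlinarith [pow_nonneg hq0 (m + 1)])
  have hNle : ∀ m, N m ≤ q / (1 - q) * q ^ m := by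
    intro m
    have h1 := neg_log_le_aux (pow_nonneg hq0 (m + 1)) (hqpow m)
    have h2 : q ^ (m + 1) / (1 - q ^ (m + 1)) ≤ q ^ (m + 1) / (1 - q) := by
      apply div_le_div_of_nonneg_left (pow_nonneg hq0 _) h1q
      have : q ^ (m + 1) ≤ q := by
        simpa using pow_le_pow_of_le_one hq0 hq1.le (Nat.one_le_iff_ne_zero.2 (Nat.succ_ne_zero m))
      linarith
    calc N m ≤ q ^ (m + 1) / (1 - q ^ (m + 1)) := h1
      _ ≤ q ^ (m + 1) / (1 - q) := h2
      _ = q / (1 - q) * q ^ m := by rw [pow_succ]; ring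
  have hNsum : Summable N :=
    Summable.of_nonneg_of_le hNnn hNle
      (((summable_geometric_of_lt_one hq0 hq1)).mul_left _)
  -- row sums
  have hF : ∀ m : ℕ, HasSum (F m) (N m) := by
    intro m
    have habs : |q ^ (m + 1)| < 1 := by
      rw [_root_.abs_of_nonneg (pow_nonneg hq0 _)]; exact hqpow m
    have h := hasSum_pow_div_log_of_abs_lt_one habs
    simpa only [hFdef, ← pow_mul] using h
  -- column sums
  set S : ℕ → ℝ := fun k => q ^ (k + 1) / (1 - q ^ (k + 1)) / ((k : ℝ) + 1) with hSdef
  have hG : ∀ k : ℕ, HasSum (fun m => F m k) (S k) := by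
    intro k
    have hg2 := ((hasSum_geometric_of_lt_one (pow_nonneg hq0 (k + 1)) (hqpow k)).mul_left
      (q ^ (k + 1))).div_const ((k : ℝ) + 1)
    have hfun : (fun m : ℕ => F m k) = fun m => q ^ (k + 1) * (q ^ (k + 1)) ^ m / ((k : ℝ) + 1) := by
      funext m
      simp only [hFdef]
      rw [mul_comm (m + 1) (k + 1), pow_mul, pow_succ']
    rw [hfun]
    convert hg2 using 1
    · rfl
    exact congrArg (· / ((k : ℝ) + 1)) (div_eq_mul_inv (q ^ (k + 1)) (1 - q ^ (k + 1)))
  -- column sum bound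
  have hkey : ∀ k : ℕ, S k ≤ q / (1 - q) * (1 / ((k : ℝ) + 1) ^ 2) := by
    intro k
    have hgs : (1 - q) * ∑ i ∈ Finset.range (k + 1), q ^ i = 1 - q ^ (k + 1) := by
      have h := geom_sum_mul q (k + 1)
      nlinarith [h]
    have hsumge : ((k : ℝ) + 1) * q ^ k ≤ ∑ i ∈ Finset.range (k + 1), q ^ i := by
      have h := Finset.card_nsmul_le_sum (Finset.range (k + 1)) (fun i => q ^ i) (q ^ k)
        (fun i hi => pow_le_pow_of_le_one hq0 hq1.le (Nat.lt_succ_iff.1 (Finset.mem_range.1 hi)))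
      simpa [Finset.card_range, nsmul_eq_mul] using h
    have hlow : (1 - q) * (((k : ℝ) + 1) * q ^ k) ≤ 1 - q ^ (k + 1) := by
      rw [← hgs]
      exact mul_le_mul_of_nonneg_left hsumge h1q.le
    have hkp : (0 : ℝ) < (k : ℝ) + 1 := by positivity
    simp only [hSdef]
    rw [div_div, div_le_iff₀ (mul_pos (h1qp k) hkp)]
    have h2 := mul_le_mul_of_nonneg_left hlow (show (0:ℝ) ≤ q / (1 - q) * (1 / ((k:ℝ)+1) ^ 2) * ((k:ℝ)+1) by positivity)
    have h3 : q ^ (k + 1) = q ^ k * q := pow_succ q k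
    calc q ^ (k + 1) = q / (1 - q) * (1 / ((k:ℝ)+1) ^ 2) * ((k:ℝ)+1) * ((1 - q) * (((k : ℝ) + 1) * q ^ k)) := by
          field_simp
          ring
      _ ≤ q / (1 - q) * (1 / ((k:ℝ)+1) ^ 2) * ((k:ℝ)+1) * (1 - q ^ (k + 1)) := h2
      _ = q / (1 - q) * (1 / ((k:ℝ)+1) ^ 2) * ((1 - q ^ (k + 1)) * ((k:ℝ)+1)) := by ring
  -- zeta(2)
  have hzeta : HasSum (fun k : ℕ => q / (1 - q) * (1 / ((k : ℝ) + 1) ^ 2))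
      (q / (1 - q) * (π ^ 2 / 6)) := by
    have hz : HasSum (fun n : ℕ => (1 : ℝ) / ((n : ℝ) + 1) ^ 2) (π ^ 2 / 6) := by
      have h := (hasSum_nat_add_iff (f := fun n : ℕ => (1 : ℝ) / (n : ℝ) ^ 2) 1).mpr
        (by simpa using hasSum_zeta_two)
      simpa using h
    exact hz.mul_left _
  have hSnn : ∀ k, 0 ≤ S k := fun k => by
    rw [hSdef]
    apply div_nonneg (div_nonneg (pow_nonneg hq0 _) (h1qp k).le); positivity
  have hSsum : Summable S := Summable.of_nonneg_of_le hSnn hkey hzeta.summable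
  have hU : Summable (Function.uncurry F) := by
    rw [show Function.uncurry F = fun p : ℕ × ℕ => F p.1 p.2 from rfl,
      summable_prod_of_nonneg (fun p => hFnn p.1 p.2)]
    exact ⟨fun m => (hF m).summable, hNsum.congr fun m => ((hF m).tsum_eq).symm⟩
  calc ∑' m, N m = ∑' (m) (k), F m k := tsum_congr fun m => ((hF m).tsum_eq).symm
    _ = ∑' (k) (m), F m k := (Summable.tsum_comm hU).symm
    _ = ∑' k, S k := tsum_congr fun k => (hG k).tsum_eq
    _ ≤ ∑' k : ℕ, q / (1 - q) * (1 / ((k : ℝ) + 1) ^ 2) := Summable.tsum_le_tsum hkey hSsum hzeta.summable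
    _ = q / (1 - q) * (π ^ 2 / 6) := hzeta.tsum_eq
    _ = π ^ 2 / 6 * (q / (1 - q)) := by ring

theorem stmt5 (b : ℝ) (hb : 1 < b) (q : ℝ) (hq0 : 0 ≤ q) (hq : q ≤ 1 - 1 / b)
    (z : ℂ) (hz : 1 < ‖z‖) :
    (1 - 1 / ‖z‖) * Real.exp ((π ^ 2 / 6) * (1 - b))
      ≤ ∏' m : ℕ, ‖(1 + (q : ℂ) ^ m / z)‖ := by
  have hb0 : (0 : ℝ) < b := by linarith
  have hq1 : q < 1 := lt_of_le_of_lt hq (by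
    have : 0 < 1 / b := by positivity
    linarith)
  have hqb : 1 / b ≤ 1 - q := by linarith
  set r := ‖z‖ with hrdef
  have hr : 1 < r := hz
  have hr0 : (0 : ℝ) < r := by linarith
  set f : ℕ → ℝ := fun m => ‖(1 + (q : ℂ) ^ m / z)‖ with hfdef
  have hqm1 : ∀ m : ℕ, q ^ m ≤ 1 := fun m => pow_le_one₀ hq0 hq1.le
  have habsw : ∀ m : ℕ, ‖(q : ℂ) ^ m / z‖ = q ^ m / r := by
    intro m
    rw [norm_div, norm_pow, Complex.norm_real, Real.norm_of_nonneg hq0]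
  have hwnn : ∀ m : ℕ, 0 ≤ q ^ m / r := fun m => div_nonneg (pow_nonneg hq0 m) hr0.le
  have hwlt : ∀ m : ℕ, q ^ m / r < 1 := fun m => by
    rw [div_lt_one hr0]; exact lt_of_le_of_lt (hqm1 m) hr
  -- lower and upper bounds for f m
  have hflb : ∀ m : ℕ, 1 - q ^ m / r ≤ f m := by
    intro m
    have h := norm_add_le (1 + (q : ℂ) ^ m / z) (-((q : ℂ) ^ m / z))
    simp only [add_neg_cancel_right, norm_one, norm_neg] at h
    rw [habsw m] at h
    simp only [hfdef]
    linarith [h]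
  have hfub : ∀ m : ℕ, f m ≤ 1 + q ^ m / r := by
    intro m
    have h := norm_add_le 1 ((q : ℂ) ^ m / z)
    rw [norm_one, habsw m] at h
    exact h
  have hfpos : ∀ m : ℕ, 0 < f m := fun m => lt_of_lt_of_le (by linarith [hwlt m]) (hflb m)
  set L : ℕ → ℝ := fun m => Real.log (f m) with hLdef
  -- summability of L
  have hLub : ∀ m : ℕ, L m ≤ q ^ m := by
    intro m
    have h := Real.log_le_sub_one_of_pos (hfpos m)
    have h2 : f m - 1 ≤ q ^ m / r := by linarith [hfub m]
    have h3 : q ^ m / r ≤ q ^ m := by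
      rw [div_le_iff₀ hr0]
      nlinarith [pow_nonneg hq0 m]
    simp only [hLdef]
    linarith
  have hLlb : ∀ m : ℕ, -(q ^ m / (r - 1)) ≤ L m := by
    intro m
    have h1 : 1 - q ^ m / r ≤ f m := hflb m
    have h2 : 0 < 1 - q ^ m / r := by linarith [hwlt m]
    have h3 : Real.log (1 - q ^ m / r) ≤ L m :=
      Real.log_le_log h2 h1
    have h4 := neg_log_le_aux (hwnn m) (hwlt m)
    have h5 : q ^ m / r / (1 - q ^ m / r) ≤ q ^ m / (r - 1) := by
      rw [div_div, div_le_div_iff₀ (by nlinarith) (by linarith)]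
      have : r * (1 - q ^ m / r) = r - q ^ m := by field_simp
      rw [this]
      nlinarith [pow_nonneg hq0 m, hqm1 m]
    linarith
  have hLsum : Summable L := by
    apply Summable.of_abs
    apply Summable.of_nonneg_of_le (fun m => abs_nonneg _)
      (show ∀ m, |L m| ≤ (1 + 1 / (r - 1)) * q ^ m from ?_)
      ((summable_geometric_of_lt_one hq0 hq1).mul_left _)
    intro m
    rw [abs_le]
    constructor
    · have := hLlb m
      have h6 : q ^ m / (r - 1) ≤ (1 + 1 / (r - 1)) * q ^ m := by
        rw [div_eq_mul_inv, one_div]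
        nlinarith [pow_nonneg hq0 m, inv_nonneg.2 (show (0:ℝ) ≤ r - 1 by linarith)]
      linarith
    · have h7 := hLub m
      have hinv : (0:ℝ) ≤ 1 / (r - 1) := by
        apply div_nonneg zero_le_one; linarith
      nlinarith [mul_nonneg hinv (pow_nonneg hq0 m)]
  -- the product equals exp of the sum of logs
  have hprod : ∏' m : ℕ, f m = Real.exp (∑' m : ℕ, L m) := by
    exact (Real.rexp_tsum_eq_tprod hfpos hLsum).symm
  rw [hfdef] at hprod
  rw [hprod]
  -- reduce to an inequality of exponents
  have h1r : 0 < 1 - 1 / r := by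
    rw [sub_pos, div_lt_one hr0]; exact hr
  rw [show (1 - 1 / r) * Real.exp (π ^ 2 / 6 * (1 - b))
      = Real.exp (Real.log (1 - 1 / r) + π ^ 2 / 6 * (1 - b)) by
    rw [Real.exp_add, Real.exp_log h1r]]
  rw [Real.exp_le_exp]
  -- split off the m = 0 term
  rw [Summable.tsum_eq_zero_add hLsum]
  have hL0 : Real.log (1 - 1 / r) ≤ L 0 := by
    apply Real.log_le_log h1r
    have := hflb 0
    simpa using this
  -- the tail
  have hqpow : ∀ n : ℕ, q ^ (n + 1) < 1 := fun n =>
    lt_of_le_of_lt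
      (by simpa using pow_le_pow_of_le_one hq0 hq1.le (Nat.one_le_iff_ne_zero.2 (Nat.succ_ne_zero n)))
      hq1
  have h1qp : ∀ n : ℕ, 0 < 1 - q ^ (n + 1) := fun n => by linarith [hqpow n]
  have hterm : ∀ m : ℕ, Real.log (1 - q ^ (m + 1)) ≤ L (m + 1) := by
    intro m
    apply Real.log_le_log (h1qp m)
    refine le_trans ?_ (hflb (m + 1))
    have : q ^ (m + 1) / r ≤ q ^ (m + 1) := by
      rw [div_le_iff₀ hr0]
      nlinarith [pow_nonneg hq0 (m + 1)]
    linarith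
  have hNnn : ∀ m : ℕ, 0 ≤ -Real.log (1 - q ^ (m + 1)) := fun m => by
    rw [neg_nonneg]
    exact Real.log_nonpos (h1qp m).le (by nlinarith [pow_nonneg hq0 (m + 1)])
  have hNle : ∀ m : ℕ, -Real.log (1 - q ^ (m + 1)) ≤ q / (1 - q) * q ^ m := by
    intro m
    have h1 := neg_log_le_aux (pow_nonneg hq0 (m + 1)) (hqpow m)
    have h2 : q ^ (m + 1) / (1 - q ^ (m + 1)) ≤ q ^ (m + 1) / (1 - q) := by
      apply div_le_div_of_nonneg_left (pow_nonneg hq0 _) (by linarith)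
      have : q ^ (m + 1) ≤ q := by
        calc q ^ (m + 1) ≤ q ^ 1 := pow_le_pow_of_le_one hq0 hq1.le (by omega)
          _ = q := pow_one q
      linarith
    calc -Real.log (1 - q ^ (m + 1)) ≤ q ^ (m + 1) / (1 - q ^ (m + 1)) := h1
      _ ≤ q ^ (m + 1) / (1 - q) := h2
      _ = q / (1 - q) * q ^ m := by rw [pow_succ]; ring
  have hNsum : Summable (fun m : ℕ => -Real.log (1 - q ^ (m + 1))) :=
    Summable.of_nonneg_of_le hNnn hNle ((summable_geometric_of_lt_one hq0 hq1).mul_left _)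
  have hlogsum : Summable (fun m : ℕ => Real.log (1 - q ^ (m + 1))) := by
    have := hNsum.neg
    simpa using this
  have hLtail : Summable (fun m : ℕ => L (m + 1)) := (summable_nat_add_iff 1).2 hLsum
  have htail : ∑' m : ℕ, Real.log (1 - q ^ (m + 1)) ≤ ∑' m : ℕ, L (m + 1) :=
    Summable.tsum_le_tsum hterm hlogsum hLtail
  -- apply the key estimate
  have hkey := sum_neg_log_le hq0 hq1
  have hqb2 : q / (1 - q) ≤ b - 1 := by
    rw [div_le_iff₀ (by linarith : (0:ℝ) < 1 - q)]
    have h := mul_le_mul_of_nonneg_left hqb (show (0:ℝ) ≤ b - 1 by linarith)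
    have h2 : (b - 1) * (1 / b) = 1 - 1 / b := by field_simp
    linarith [h, h2.symm.le]
  have hπ : (0 : ℝ) ≤ π ^ 2 / 6 := by positivity
  have hfin : π ^ 2 / 6 * (1 - b) ≤ ∑' m : ℕ, Real.log (1 - q ^ (m + 1)) := by
    have h1 : ∑' m : ℕ, -Real.log (1 - q ^ (m + 1)) ≤ π ^ 2 / 6 * (b - 1) := by
      refine hkey.trans ?_
      have := mul_le_mul_of_nonneg_left hqb2 hπ
      linarith
    have h2 : ∑' m : ℕ, Real.log (1 - q ^ (m + 1))
        = -∑' m : ℕ, -Real.log (1 - q ^ (m + 1)) := by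
      rw [← tsum_neg]
      simp
    rw [h2]
    linarith
  linarith [hL0, htail, hfin]
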